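/- For the group G = GL_n(ℂ) acting on V = Hom(ℂ^n, ℂ^p) ⊕ Hom(ℂ^p, ℂ^n) by g.(L ⊕ L̃) = (L g⁻¹) ⊕ (g L̃), the space of G-invariant quadratic forms S²(V*)^G is isomorphic as a complex vector space to End(ℂ^p)*, i.e. it has dimension p². -/

import Mathlib

open Matrix

/-- The space of `GL n ℂ`-invariant quadratic forms on
`V = Hom(ℂⁿ, ℂᵖ) ⊕ Hom(ℂᵖ, ℂⁿ)`, where the two `Hom` spaces are realized as
rectangular matrices and `g ∈ GL n ℂ` acts by `(L, M) ↦ (L g⁻¹, g M)`. -/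
def invariantQuadraticFormsGL (n p : ℕ) :
    Submodule ℂ (QuadraticForm ℂ
      (Matrix (Fin p) (Fin n) ℂ × Matrix (Fin n) (Fin p) ℂ)) where
  carrier := {q | ∀ g : GL (Fin n) ℂ,
    ∀ L : Matrix (Fin p) (Fin n) ℂ, ∀ M : Matrix (Fin n) (Fin p) ℂ,
      q (L * (↑g⁻¹ : Matrix (Fin n) (Fin n) ℂ), (↑g : Matrix (Fin n) (Fin n) ℂ) * M) = q (L, M)}
  add_mem' := by
    intro a b ha hb g L M
    simp only [QuadraticMap.add_apply, ha g L M, hb g L M]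
  zero_mem' := by
    intro g L M
    simp
  smul_mem' := by
    intro c q hq g L M
    simp only [QuadraticMap.smul_apply, hq g L M]

namespace InvGLAux

variable {n p : ℕ}

theorem stdBasis_mul_diagonal (i : Fin p) (a : Fin n) (c : ℂ) (d : Fin n → ℂ) :
    Matrix.single i a c * diagonal d = Matrix.single i a (c * d a) := by
  ext i' a'
  simp only [Matrix.mul_diagonal, Matrix.single, Matrix.of_apply]
  by_cases h1 : i = i' <;> by_cases h2 : a = a' <;> simp [h1, h2]

theorem diagonal_mul_stdBasis (b : Fin n) (j : Fin p) (c : ℂ) (d : Fin n → ℂ) :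
    diagonal d * Matrix.single b j c = Matrix.single b j (d b * c) := by
  ext b' j'
  simp only [Matrix.diagonal_mul, Matrix.single, Matrix.of_apply]
  by_cases h1 : b = b' <;> by_cases h2 : j = j' <;> simp [h1, h2]

/-- The bilinear map `(x, y) ↦ φ (x.1 * y.2)`. -/
noncomputable def mulBilin (φ : Module.Dual ℂ (Matrix (Fin p) (Fin p) ℂ)) :
    LinearMap.BilinMap ℂ (Matrix (Fin p) (Fin n) ℂ × Matrix (Fin n) (Fin p) ℂ) ℂ :=
  LinearMap.mk₂ ℂ (fun x y => φ (x.1 * y.2))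
    (fun x x' y => by simp [Matrix.add_mul])
    (fun c x y => by simp [Matrix.smul_mul])
    (fun x y y' => by simp [Matrix.mul_add])
    (fun c x y => by simp [Matrix.mul_smul])

@[simp] theorem mulBilin_apply (φ : Module.Dual ℂ (Matrix (Fin p) (Fin p) ℂ))
    (x y : Matrix (Fin p) (Fin n) ℂ × Matrix (Fin n) (Fin p) ℂ) :
    mulBilin φ x y = φ (x.1 * y.2) := rfl

/-- The linear map sending `φ` to the quadratic form `(L, M) ↦ φ (L * M)`. -/
noncomputable def Phi :
    Module.Dual ℂ (Matrix (Fin p) (Fin p) ℂ) →ₗ[ℂ]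
      QuadraticForm ℂ (Matrix (Fin p) (Fin n) ℂ × Matrix (Fin n) (Fin p) ℂ) where
  toFun φ := (mulBilin φ).toQuadraticMap
  map_add' φ ψ := by
    ext x
    simp [LinearMap.BilinMap.toQuadraticMap_apply]
  map_smul' c φ := by
    ext x
    simp [LinearMap.BilinMap.toQuadraticMap_apply]

@[simp] theorem Phi_apply (φ : Module.Dual ℂ (Matrix (Fin p) (Fin p) ℂ))
    (x : Matrix (Fin p) (Fin n) ℂ × Matrix (Fin n) (Fin p) ℂ) :
    Phi φ x = φ (x.1 * x.2) := rfl

end InvGLAux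

namespace InvGLAux2
open InvGLAux

variable {n p : ℕ}

/-- scalar `2` as a unit. -/
noncomputable def twoUnit : GL (Fin n) ℂ :=
  ⟨(2 : ℂ) • 1, (2 : ℂ)⁻¹ • 1,
    by rw [Matrix.smul_mul, Matrix.mul_smul, Matrix.mul_one, smul_smul]; norm_num,
    by rw [Matrix.smul_mul, Matrix.mul_smul, Matrix.mul_one, smul_smul]; norm_num⟩

@[simp] theorem coe_twoUnit : ((twoUnit : GL (Fin n) ℂ) : Matrix (Fin n) (Fin n) ℂ) = (2 : ℂ) • 1 := rfl
@[simp] theorem coe_twoUnit_inv :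
    ((twoUnit⁻¹ : GL (Fin n) ℂ) : Matrix (Fin n) (Fin n) ℂ) = (2 : ℂ)⁻¹ • 1 := rfl

/-- diagonal unit. -/
noncomputable def diagUnit (d : Fin n → ℂ) (hd : ∀ x, d x ≠ 0) : GL (Fin n) ℂ :=
  ⟨diagonal d, diagonal fun x => (d x)⁻¹,
    by rw [Matrix.diagonal_mul_diagonal]
       ext i j
       rcases eq_or_ne i j with rfl | h
       · simp [mul_inv_cancel₀ (hd _)]
       · simp [Matrix.diagonal_apply_ne _ h, Matrix.one_apply_ne h],
    by rw [Matrix.diagonal_mul_diagonal]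
       ext i j
       rcases eq_or_ne i j with rfl | h
       · simp [inv_mul_cancel₀ (hd _)]
       · simp [Matrix.diagonal_apply_ne _ h, Matrix.one_apply_ne h]⟩

@[simp] theorem coe_diagUnit (d : Fin n → ℂ) (hd : ∀ x, d x ≠ 0) :
    ((diagUnit d hd : GL (Fin n) ℂ) : Matrix (Fin n) (Fin n) ℂ) = diagonal d := rfl
@[simp] theorem coe_diagUnit_inv (d : Fin n → ℂ) (hd : ∀ x, d x ≠ 0) :
    (((diagUnit d hd)⁻¹ : GL (Fin n) ℂ) : Matrix (Fin n) (Fin n) ℂ)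
      = diagonal fun x => (d x)⁻¹ := rfl

/-- permutation unit. -/
noncomputable def permUnit (σ : Equiv.Perm (Fin n)) : GL (Fin n) ℂ :=
  ⟨σ.toPEquiv.toMatrix, σ⁻¹.toPEquiv.toMatrix,
    by rw [← PEquiv.toMatrix_trans, ← Equiv.toPEquiv_trans]
       simp [Equiv.Perm.inv_def, Equiv.self_trans_symm, Equiv.toPEquiv_refl],
    by rw [← PEquiv.toMatrix_trans, ← Equiv.toPEquiv_trans]
       simp [Equiv.Perm.inv_def, Equiv.symm_trans_self, Equiv.toPEquiv_refl]⟩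

@[simp] theorem coe_permUnit (σ : Equiv.Perm (Fin n)) :
    ((permUnit σ : GL (Fin n) ℂ) : Matrix (Fin n) (Fin n) ℂ) = σ.toPEquiv.toMatrix := rfl
@[simp] theorem coe_permUnit_inv (σ : Equiv.Perm (Fin n)) :
    (((permUnit σ)⁻¹ : GL (Fin n) ℂ) : Matrix (Fin n) (Fin n) ℂ)
      = σ⁻¹.toPEquiv.toMatrix := rfl

theorem stdBasis_mul_perm (i : Fin p) (a : Fin n) (c : ℂ) (σ : Equiv.Perm (Fin n)) :
    Matrix.single i a c * (σ.toPEquiv.toMatrix : Matrix (Fin n) (Fin n) ℂ) = Matrix.single i (σ a) c := by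
  rw [PEquiv.mul_toMatrix_toPEquiv]
  ext i' a'
  by_cases h : σ a = a'
  · have h2 : a = σ.symm a' := by rw [← h]; simp
    simp [Matrix.single, h, h2]
  · have h2 : a ≠ σ.symm a' := fun hh => h (by rw [hh]; simp)
    simp [Matrix.single, h, h2]

theorem perm_mul_stdBasis (b : Fin n) (j : Fin p) (c : ℂ) (σ : Equiv.Perm (Fin n)) :
    (σ.toPEquiv.toMatrix : Matrix (Fin n) (Fin n) ℂ) * Matrix.single b j c = Matrix.single (σ.symm b) j c := by
  rw [PEquiv.toMatrix_toPEquiv_mul]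
  ext b' j'
  by_cases h : σ.symm b = b'
  · have h2 : b = σ b' := by rw [← h]; simp
    simp [Matrix.single, h, h2]
  · have h2 : b ≠ σ b' := fun hh => h (by rw [hh]; simp)
    simp [Matrix.single, h, h2]

end InvGLAux2

namespace InvGLAux3
open InvGLAux InvGLAux2

variable {n p : ℕ}

theorem exists_dual (hn : 0 < n)
    (q : QuadraticForm ℂ (Matrix (Fin p) (Fin n) ℂ × Matrix (Fin n) (Fin p) ℂ))
    (hq : ∀ g : GL (Fin n) ℂ, ∀ L : Matrix (Fin p) (Fin n) ℂ, ∀ M : Matrix (Fin n) (Fin p) ℂ,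
      q (L * (↑g⁻¹ : Matrix (Fin n) (Fin n) ℂ), (↑g : Matrix (Fin n) (Fin n) ℂ) * M)
        = q (L, M)) :
    ∃ φ : Module.Dual ℂ (Matrix (Fin p) (Fin p) ℂ), Phi φ = q := by
  have hL0 : ∀ L : Matrix (Fin p) (Fin n) ℂ, q (L, 0) = 0 := by
    intro L
    have h := hq twoUnit L 0
    rw [coe_twoUnit, coe_twoUnit_inv, Matrix.mul_smul, Matrix.mul_one, Matrix.mul_zero] at h
    have h2 : (((2:ℂ)⁻¹ • L, (0 : Matrix (Fin n) (Fin p) ℂ))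
        : Matrix (Fin p) (Fin n) ℂ × Matrix (Fin n) (Fin p) ℂ) = (2:ℂ)⁻¹ • (L, 0) := by
      simp
    rw [h2, QuadraticMap.map_smul, smul_eq_mul] at h
    linear_combination (-4/3 : ℂ) * h
  have hM0 : ∀ M : Matrix (Fin n) (Fin p) ℂ, q (0, M) = 0 := by
    intro M
    have h := hq twoUnit 0 M
    rw [coe_twoUnit, coe_twoUnit_inv, Matrix.zero_mul, Matrix.smul_mul, Matrix.one_mul] at h
    have h2 : (((0 : Matrix (Fin p) (Fin n) ℂ), (2:ℂ) • M)
        : Matrix (Fin p) (Fin n) ℂ × Matrix (Fin n) (Fin p) ℂ) = (2:ℂ) • (0, M) := by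
      simp
    rw [h2, QuadraticMap.map_smul, smul_eq_mul] at h
    linear_combination (1/3 : ℂ) * h
  set B : Matrix (Fin p) (Fin n) ℂ →ₗ[ℂ] Matrix (Fin n) (Fin p) ℂ →ₗ[ℂ] ℂ :=
    LinearMap.compl₁₂ (QuadraticMap.polarBilin q) (LinearMap.inl ℂ _ _) (LinearMap.inr ℂ _ _)
    with hBdef
  have hB : ∀ L M, B L M = q (L, M) := by
    intro L M
    have h1 : B L M = QuadraticMap.polar q (L, 0) (0, M) := by
      simp [hBdef, LinearMap.compl₁₂_apply]
    rw [h1, QuadraticMap.polar]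
    have h2 : (((L, 0) + (0, M)) : Matrix (Fin p) (Fin n) ℂ × Matrix (Fin n) (Fin p) ℂ)
        = (L, M) := by simp
    rw [h2, hL0, hM0]
    ring
  have hBinv : ∀ (g : GL (Fin n) ℂ) L M,
      B (L * (↑g⁻¹ : Matrix (Fin n) (Fin n) ℂ)) ((↑g : Matrix (Fin n) (Fin n) ℂ) * M)
        = B L M := by
    intro g L M
    rw [hB, hB, hq]
  have hdiag : ∀ (i j : Fin p) (a b : Fin n), a ≠ b →
      B (Matrix.single i a 1) (Matrix.single b j 1) = 0 := by
    intro i j a b hab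
    set d : Fin n → ℂ := fun x => if x = a then 2 else 1 with hd
    have hd0 : ∀ x, d x ≠ 0 := by
      intro x; by_cases h : x = a <;> simp [hd, h]
    have h := hBinv (diagUnit d hd0) (Matrix.single i a 1) (Matrix.single b j 1)
    rw [coe_diagUnit, coe_diagUnit_inv, stdBasis_mul_diagonal, diagonal_mul_stdBasis] at h
    have e1 : (1 : ℂ) * (d a)⁻¹ = 2⁻¹ := by simp [hd]
    have e2 : d b * 1 = 1 := by simp [hd, hab.symm]
    rw [e1, e2] at h
    have e3 : Matrix.single i a ((2:ℂ)⁻¹) = (2:ℂ)⁻¹ • Matrix.single i a 1 := by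
      rw [smul_single, smul_eq_mul, mul_one]
    rw [e3, _root_.map_smul, LinearMap.smul_apply, smul_eq_mul] at h
    linear_combination (-2 : ℂ) * h
  have hswap : ∀ (i j : Fin p) (a : Fin n),
      B (Matrix.single i a 1) (Matrix.single a j 1)
        = B (Matrix.single i ⟨0, hn⟩ 1) (Matrix.single ⟨0, hn⟩ j 1) := by
    intro i j a
    have h := hBinv (permUnit (Equiv.swap a ⟨0, hn⟩))
      (Matrix.single i a 1) (Matrix.single a j 1)
    rw [coe_permUnit, coe_permUnit_inv, stdBasis_mul_perm, perm_mul_stdBasis] at h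
    rw [Equiv.swap_inv, Equiv.symm_swap, Equiv.swap_apply_left] at h
    exact h.symm
  refine ⟨{ toFun := fun A => ∑ i, ∑ j,
              B (Matrix.single i ⟨0, hn⟩ 1) (Matrix.single ⟨0, hn⟩ j 1) * A i j,
            map_add' := fun A A' => by
              simp [Matrix.add_apply, mul_add, Finset.sum_add_distrib],
            map_smul' := fun c A => by
              simp [Matrix.smul_apply, smul_eq_mul, Finset.mul_sum, mul_left_comm] }, ?_⟩
  set φ : Module.Dual ℂ (Matrix (Fin p) (Fin p) ℂ) :=
    { toFun := fun A => ∑ i, ∑ j,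
        B (Matrix.single i ⟨0, hn⟩ 1) (Matrix.single ⟨0, hn⟩ j 1) * A i j,
      map_add' := fun A A' => by
        simp [Matrix.add_apply, mul_add, Finset.sum_add_distrib],
      map_smul' := fun c A => by
        simp [Matrix.smul_apply, smul_eq_mul, Finset.mul_sum, mul_left_comm] } with hφdef
  have hφ : ∀ A : Matrix (Fin p) (Fin p) ℂ,
      φ A = ∑ i, ∑ j, B (Matrix.single i ⟨0, hn⟩ 1) (Matrix.single ⟨0, hn⟩ j 1) * A i j :=
    fun A => rfl
  have hφstd : ∀ (i j : Fin p),
      φ (Matrix.single i j 1)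
        = B (Matrix.single i ⟨0, hn⟩ 1) (Matrix.single ⟨0, hn⟩ j 1) := by
    intro i j
    have hz : ∀ i' j' : Fin p, ¬(i = i' ∧ j = j') → Matrix.single i j (1:ℂ) i' j' = 0 := by
      intro i' j' h
      simp [Matrix.single, h]
    rw [hφ]
    rw [Finset.sum_eq_single i ?_ ?_]
    · rw [Finset.sum_eq_single j ?_ ?_]
      · simp [Matrix.single]
      · intro j' _ hj'
        rw [hz i j' (by tauto), mul_zero]
      · intro h; exact absurd (Finset.mem_univ j) h
    · intro i' _ hi'
      apply Finset.sum_eq_zero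
      intro j' _
      rw [hz i' j' (by tauto), mul_zero]
    · intro h; exact absurd (Finset.mem_univ i) h
  -- the second bilinear map
  set B2 : Matrix (Fin p) (Fin n) ℂ →ₗ[ℂ] Matrix (Fin n) (Fin p) ℂ →ₗ[ℂ] ℂ :=
    LinearMap.compl₁₂ (mulBilin φ) (LinearMap.inl ℂ _ _) (LinearMap.inr ℂ _ _) with hB2def
  have hB2 : ∀ L M, B2 L M = φ (L * M) := by
    intro L M
    simp [hB2def, LinearMap.compl₁₂_apply]
  have hmulsame : ∀ (i : Fin p) (a : Fin n) (j : Fin p),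
      Matrix.single i a (1:ℂ) * Matrix.single a j (1:ℂ) = Matrix.single i j 1 := by
    intro i a j
    ext i' j'
    simp only [Matrix.mul_apply, Matrix.single, Matrix.of_apply, ite_and]
    rw [Finset.sum_eq_single a (fun c _ hc => by simp [Ne.symm hc]) (by simp)]
    by_cases h1 : i = i' <;> by_cases h2 : j = j' <;> simp [h1, h2]
  have hmulne : ∀ (i : Fin p) (a b : Fin n) (j : Fin p), a ≠ b →
      Matrix.single i a (1:ℂ) * Matrix.single b j (1:ℂ) = 0 := by
    intro i a b j hab
    ext i' j'
    simp [Matrix.mul_apply, Matrix.single, ite_and, Finset.sum_ite_eq, hab]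
  have hBB2 : B = B2 := by
    apply Module.Basis.ext (Matrix.stdBasis ℂ (Fin p) (Fin n))
    rintro ⟨i, a⟩
    apply Module.Basis.ext (Matrix.stdBasis ℂ (Fin n) (Fin p))
    rintro ⟨b, j⟩
    rw [Matrix.stdBasis_eq_single, Matrix.stdBasis_eq_single, hB2]
    by_cases hab : a = b
    · subst hab
      rw [hmulsame, hφstd, hswap]
    · rw [hmulne i a b j hab, map_zero, hdiag i j a b hab]
  refine QuadraticMap.ext fun x => ?_
  obtain ⟨L, M⟩ := x
  show φ (L * M) = q (L, M)
  rw [← hB L M, hBB2, hB2]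

theorem Phi_injective (hn : 0 < n) :
    Function.Injective (Phi (n := n) (p := p)) := by
  intro φ ψ h
  have h' : ∀ (L : Matrix (Fin p) (Fin n) ℂ) (M : Matrix (Fin n) (Fin p) ℂ),
      φ (L * M) = ψ (L * M) := by
    intro L M
    have := congrArg (fun Q : QuadraticForm ℂ
        (Matrix (Fin p) (Fin n) ℂ × Matrix (Fin n) (Fin p) ℂ) => Q (L, M)) h
    simpa using this
  have hmulsame : ∀ (i j : Fin p),
      Matrix.single i (⟨0, hn⟩ : Fin n) (1:ℂ) * Matrix.single (⟨0, hn⟩ : Fin n) j (1:ℂ)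
        = Matrix.single i j 1 := by
    intro i j
    ext i' j'
    simp only [Matrix.mul_apply, Matrix.single, Matrix.of_apply, ite_and]
    rw [Finset.sum_eq_single (⟨0, hn⟩ : Fin n) (fun c _ hc => by simp [Ne.symm hc]) (by simp)]
    by_cases h1 : i = i' <;> by_cases h2 : j = j' <;> simp [h1, h2]
  have hE : ∀ i j : Fin p, φ (Matrix.single i j 1) = ψ (Matrix.single i j 1) := by
    intro i j
    have := h' (Matrix.single i ⟨0, hn⟩ 1) (Matrix.single ⟨0, hn⟩ j 1)
    rwa [hmulsame] at this
  apply LinearMap.ext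
  intro A
  rw [matrix_eq_sum_single A, map_sum, map_sum]
  refine Finset.sum_congr rfl fun i _ => ?_
  rw [map_sum, map_sum]
  refine Finset.sum_congr rfl fun j _ => ?_
  rw [show Matrix.single i j (A i j) = A i j • Matrix.single i j (1:ℂ) by
      rw [smul_single, smul_eq_mul, mul_one],
    _root_.map_smul, _root_.map_smul, hE]

end InvGLAux3

/-- For `G = GL_n(ℂ)` acting on
`V = Hom(ℂⁿ, ℂᵖ) ⊕ Hom(ℂᵖ, ℂⁿ)` by `g.(L ⊕ L̃) = (L g⁻¹) ⊕ (g L̃)`,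
the space `S²(V*)^G` of `G`-invariant quadratic forms is isomorphic, as a complex
vector space, to `End(ℂᵖ)* = (Matrix p p ℂ)*`; in particular it has dimension `p²`. -/
theorem invariant_quadratic_forms_GL_iso_dual_End (n p : ℕ) (hn : 0 < n) :
    Nonempty ((invariantQuadraticFormsGL n p) ≃ₗ[ℂ]
        Module.Dual ℂ (Matrix (Fin p) (Fin p) ℂ)) ∧
      Module.finrank ℂ (invariantQuadraticFormsGL n p) = p ^ 2 := by
  classical
  have hmem : ∀ φ : Module.Dual ℂ (Matrix (Fin p) (Fin p) ℂ),
      InvGLAux.Phi φ ∈ invariantQuadraticFormsGL n p := by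
    intro φ g L M
    show φ ((L * (↑g⁻¹ : Matrix (Fin n) (Fin n) ℂ)) * ((↑g : Matrix (Fin n) (Fin n) ℂ) * M))
      = φ (L * M)
    congr 1
    rw [Matrix.mul_assoc L, ← Matrix.mul_assoc ((↑g⁻¹ : Matrix (Fin n) (Fin n) ℂ)),
      Units.inv_mul, Matrix.one_mul]
  set Φ' : Module.Dual ℂ (Matrix (Fin p) (Fin p) ℂ) →ₗ[ℂ] invariantQuadraticFormsGL n p :=
    LinearMap.codRestrict _ InvGLAux.Phi hmem with hdef
  have hinj : Function.Injective Φ' := by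
    intro φ ψ h
    apply InvGLAux3.Phi_injective hn
    exact congrArg Subtype.val h
  have hsurj : Function.Surjective Φ' := by
    rintro ⟨q, hq⟩
    obtain ⟨φ, hφ⟩ := InvGLAux3.exists_dual hn q hq
    exact ⟨φ, Subtype.ext hφ⟩
  let e := LinearEquiv.ofBijective Φ' ⟨hinj, hsurj⟩
  refine ⟨⟨e.symm⟩, ?_⟩
  rw [e.symm.finrank_eq]
  simp [Module.finrank_linearMap, Module.finrank_matrix, sq]
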